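/- If the yaw dynamics satisfy ψ''(t) = (φ'(t)·θ'(t)·(I_x − I_y) + τ(t))/I_z, where the control torque is τ = τ_eq + τ_sw with τ_eq = I_z·(v' − γ(ψ' − ᵈψ')) − φ'θ'(I_x − I_y) and τ_sw = −I_z·(c₁·sg(s) + c₂·s), then the Lyapunov function V(t) = (1/2)s(t)² has derivative V'(t) = −c₁·s(t)·sg(s(t)) − c₂·s(t)² ≤ 0 for all t; hence the yaw angle control system is Lyapunov stable. -/

import Mathlib

/-- The saturated sign function with parameter `ε`. -/
noncomputable def sg (ε x : ℝ) : ℝ :=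
  if x > ε then 1 else if x < -ε then -1 else x / ε

lemma sg_mul_nonneg {ε : ℝ} (hε : 0 < ε) (y : ℝ) : 0 ≤ y * sg ε y := by
  unfold sg
  split_ifs with h1 h2
  · nlinarith
  · nlinarith
  · have : y * (y / ε) = y ^ 2 / ε := by ring
    rw [this]; positivity

/-- Under the yaw-torque law `τ = τ_eq + τ_sw`, the Lyapunov function
`V = (1/2)s²` has derivative `−c₁·s·sg(s) − c₂·s² ≤ 0`; the yaw angle
control system is Lyapunov stable. -/
theorem yaw_controller_stable
    (ε lam γ c₁ c₂ Ix Iy Iz : ℝ) (hε0 : 0 < ε) (hε1 : ε < 1)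
    (hlam : 0 < lam) (hγ : 0 < γ) (hc₁ : 0 < c₁) (hc₂ : 0 < c₂) (hIz : Iz ≠ 0)
    (ψ dψ φ θ : ℝ → ℝ)
    (hψ : Differentiable ℝ ψ) (hψ' : Differentiable ℝ (deriv ψ))
    (hdψ : Differentiable ℝ dψ) (hdψ' : Differentiable ℝ (deriv dψ))
    (hφ : Differentiable ℝ φ) (hφ' : Differentiable ℝ (deriv φ))
    (hθ : Differentiable ℝ θ) (hθ' : Differentiable ℝ (deriv θ))
    (e v s tau : ℝ → ℝ)
    (he : e = fun t => ψ t - dψ t)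
    (hv : v = fun t => deriv dψ t - lam * e t)
    (hs : s = fun t => γ * e t + (deriv ψ t - v t))
    (htau : ∀ t, tau t
        = (Iz * (deriv v t - γ * (deriv ψ t - deriv dψ t))
            - deriv φ t * deriv θ t * (Ix - Iy))
          + (-(Iz * (c₁ * sg ε (s t) + c₂ * s t))))
    (hdyn : ∀ t, deriv (deriv ψ) t
        = (deriv φ t * deriv θ t * (Ix - Iy) + tau t) / Iz) :
    ∀ t, HasDerivAt (fun r => (1 / 2 : ℝ) * s r ^ 2)
        (-(c₁ * s t * sg ε (s t)) - c₂ * s t ^ 2) t ∧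
      -(c₁ * s t * sg ε (s t)) - c₂ * s t ^ 2 ≤ 0 := by
  intro t
  have he' : ∀ x, HasDerivAt e (deriv ψ x - deriv dψ x) x := by
    intro x
    rw [he]
    exact (hψ x).hasDerivAt.sub (hdψ x).hasDerivAt
  have hv' : ∀ x, HasDerivAt v
      (deriv (deriv dψ) x - lam * (deriv ψ x - deriv dψ x)) x := by
    intro x
    rw [hv]
    exact (hdψ' x).hasDerivAt.sub ((he' x).const_mul lam)
  have hderivv : deriv v t = deriv (deriv dψ) t - lam * (deriv ψ t - deriv dψ t) :=
    (hv' t).deriv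
  have hs' : HasDerivAt s
      (γ * (deriv ψ t - deriv dψ t) + (deriv (deriv ψ) t - deriv v t)) t := by
    rw [hs]
    refine ((he' t).const_mul γ).add ((hψ' t).hasDerivAt.sub ?_)
    rw [hderivv]
    exact hv' t
  have hval : γ * (deriv ψ t - deriv dψ t) + (deriv (deriv ψ) t - deriv v t)
      = -(c₁ * sg ε (s t) + c₂ * s t) := by
    rw [hdyn t, htau t]
    field_simp
    ring
  rw [hval] at hs'
  constructor
  · have := (hs'.pow 2).const_mul ((1:ℝ)/2)
    refine this.congr_deriv ?_
    ring
  · have h1 := sg_mul_nonneg hε0 (s t)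
    nlinarith [sq_nonneg (s t)]
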